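/- Let X be a pre-Riesz space and let A₁, …, A_m ⊆ X be subsets such that every element of A_i is disjoint to every element of A_j whenever i ≠ j. For each j ∈ {1, …, m}, let (x_{j,1}, …, x_{j,n_j}) be a linearly independent system of vectors in A_j. Then the combined system (x_{1,1}, …, x_{1,n_1}, …, x_{m,1}, …, x_{m,n_m}) is linearly independent over ℝ. -/

import Mathlib

open Pointwise

/-- The former Mathlib class `OrderedSMul`, removed from Mathlib, restated with its old meaning. -/
class OrderedSMul (R M : Type*) [Semiring R] [PartialOrder R] [IsOrderedRing R] [AddCommMonoid M]
    [PartialOrder M] [IsOrderedAddMonoid M] [SMulWithZero R M] : Prop where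
  protected smul_lt_smul_of_pos : ∀ {a b : M} {c : R}, a < b → 0 < c → c • a < c • b
  protected lt_of_smul_lt_smul_of_pos : ∀ {a b : M} {c : R}, c • a < c • b → 0 < c → a < b

variable {X : Type*} [AddCommGroup X] [PartialOrder X] [IsOrderedAddMonoid X] [Module ℝ X] [OrderedSMul ℝ X]

/-- Two elements of an ordered vector space are disjoint if the sets `{x+y, -x-y}` and
`{x-y, y-x}` have the same set of upper bounds. -/
def UDisjoint (x y : X) : Prop :=
  upperBounds ({x + y, -x - y} : Set X) = upperBounds ({x - y, y - x} : Set X)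

/-- The disjoint complement `S^⊥` of a set `S`. -/
def dComp (S : Set X) : Set X := {x : X | ∀ s ∈ S, UDisjoint x s}

/-- A band: a set equal to its double disjoint complement. -/
def IsBand (B : Set X) : Prop := B = dComp (dComp B)

/-- A projection band: a band `B` with `B ∩ B^⊥ = {0}` and `B + B^⊥ = X`. -/
def IsProjBand (B : Set X) : Prop :=
  IsBand B ∧ B ∩ dComp B = {0} ∧ ∀ x : X, ∃ b ∈ B, ∃ c ∈ dComp B, x = b + c

/-- A positive linear operator. -/
def IsPosMap (T : X →ₗ[ℝ] X) : Prop := ∀ x : X, 0 ≤ x → 0 ≤ T x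

/-- A band projection: a linear projection whose range is a projection band and whose
kernel is the disjoint complement of the range. -/
def IsBandProj (P : X →ₗ[ℝ] X) : Prop :=
  P ∘ₗ P = P ∧ IsProjBand (Set.range ⇑P) ∧ (LinearMap.ker P : Set X) = dComp (Set.range ⇑P)

/-- A pre-Riesz space: for every nonempty finite `A ⊆ X` and every `x`, if the upper bounds
of `x + A` are contained in the upper bounds of `A`, then `x ≥ 0`. -/
def IsPreRiesz (X : Type*) [AddCommGroup X] [PartialOrder X] [IsOrderedAddMonoid X] [Module ℝ X]
    [OrderedSMul ℝ X] : Prop :=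
  ∀ (A : Set X) (x : X), A.Finite → A.Nonempty →
    upperBounds ((x + ·) '' A) ⊆ upperBounds A → 0 ≤ x

instance OrderedSMul.toPosSMulMono' : PosSMulMono ℝ X :=
  ⟨fun c hc a b hab => by
    rcases hc.eq_or_lt with h0 | hc'
    · rw [← h0, zero_smul, zero_smul]
    · rcases hab.eq_or_lt with h1 | h
      · rw [h1]
      · exact (OrderedSMul.smul_lt_smul_of_pos h hc').le⟩


section AuxPreRiesz

/-- Helper: membership in upper bounds of a pair. -/
lemma mem_ub_pair {a b w : X} :
    w ∈ upperBounds ({a, b} : Set X) ↔ a ≤ w ∧ b ≤ w := by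
  constructor
  · intro h
    exact ⟨h (Set.mem_insert _ _), h (Set.mem_insert_of_mem _ rfl)⟩
  · rintro ⟨h1, h2⟩ c hc
    rcases hc with rfl | hc
    · exact h1
    · rw [Set.mem_singleton_iff] at hc; subst hc; exact h2

/-- Transfer an inequality along an `abel`-provable difference identity. -/
lemma le_of_le_of_sub_eq {a b c d : X} (h : a ≤ b) (e : b - a = d - c) : c ≤ d :=
  sub_nonneg.mp (e ▸ sub_nonneg.mpr h)

/-- Halving: `a + a ≤ b + b → a ≤ b`. -/
lemma half_le {a b : X} (h : a + a ≤ b + b) : a ≤ b := by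
  have h2 : (2:ℝ) • a ≤ (2:ℝ) • b := by rw [two_smul, two_smul]; exact h
  have h3 := smul_le_smul_of_nonneg_left h2 (by norm_num : (0:ℝ) ≤ 1/2)
  have e : ∀ y : X, (1/2 : ℝ) • ((2:ℝ) • y) = y := by
    intro y; rw [smul_smul]; norm_num
  rwa [e, e] at h3

lemma nonneg_of_pair {w z : X} (h1 : z ≤ w) (h2 : -z ≤ w) : 0 ≤ w := by
  refine half_le (a := 0) ?_
  have := add_le_add h1 h2
  simpa using this

/-- Convexity: if `w ≥ x` and `w ≥ -x` then `w ≥ s • x` for `|s| ≤ 1`. -/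
lemma smul_le_of_abs_le {w x : X} (h1 : x ≤ w) (h2 : -x ≤ w) {s : ℝ} (hs : |s| ≤ 1) :
    s • x ≤ w := by
  obtain ⟨hs1, hs2⟩ := abs_le.mp hs
  have ha : (0:ℝ) ≤ (1+s)/2 := by linarith
  have hb : (0:ℝ) ≤ (1-s)/2 := by linarith
  have key := add_le_add (smul_le_smul_of_nonneg_left h1 ha)
    (smul_le_smul_of_nonneg_left h2 hb)
  have e1 : ((1+s)/2 : ℝ) • x + ((1-s)/2 : ℝ) • (-x) = s • x := by module
  have e2 : ((1+s)/2 : ℝ) • w + ((1-s)/2 : ℝ) • w = w := by module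
  rwa [e1, e2] at key

/-- `AIZ x z` expresses that (in the Riesz completion) `|x| ∧ |z| = 0`:
every element below all upper bounds of `{x,-x}` and all upper bounds of `{z,-z}`
is below `0`. -/
def AIZ (x z : X) : Prop :=
  ∀ v : X, (∀ w : X, x ≤ w → -x ≤ w → v ≤ w) → (∀ w : X, z ≤ w → -z ≤ w → v ≤ w) → v ≤ 0

lemma AIZ.symm {x z : X} (h : AIZ x z) : AIZ z x := fun v h1 h2 => h v h2 h1

lemma AIZ.neg_right {x z : X} (h : AIZ x z) : AIZ x (-z) := by
  intro v h1 h2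
  exact h v h1 (fun w hw1 hw2 => h2 w hw2 (by rwa [neg_neg]))

lemma AIZ.zero_right (x : X) : AIZ x 0 := by
  intro v _ h2
  exact h2 0 le_rfl (by simp)

lemma AIZ.add_right {x z₁ z₂ : X} (h1 : AIZ x z₁) (h2 : AIZ x z₂) : AIZ x (z₁ + z₂) := by
  intro v hvx hvz
  -- first: v ≤ w₂ for every upper bound w₂ of {z₂, -z₂}
  have key : ∀ w₂ : X, z₂ ≤ w₂ → -z₂ ≤ w₂ → v ≤ w₂ := by
    intro w₂ hw1 hw2
    have hw₂pos : 0 ≤ w₂ := nonneg_of_pair hw1 hw2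
    have hv : v - w₂ ≤ 0 := by
      apply h1 (v - w₂)
      · intro w hx1 hx2
        have : v ≤ w := hvx w hx1 hx2
        have : v ≤ w + w₂ := le_trans this (le_add_of_nonneg_right hw₂pos)
        exact le_of_le_of_sub_eq this (by abel)
      · intro w hz1 hz2
        have h1' : z₁ + z₂ ≤ w + w₂ := add_le_add hz1 hw1
        have h2' : -(z₁ + z₂) ≤ w + w₂ := by
          have := add_le_add hz2 hw2
          exact le_of_le_of_sub_eq this (by abel)
        have : v ≤ w + w₂ := hvz (w + w₂) h1' h2'
        exact le_of_le_of_sub_eq this (by abel)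
    exact le_of_le_of_sub_eq hv (by abel)
  exact h2 v hvx key

lemma AIZ.smul_right {x z : X} (c : ℝ) (h : AIZ x z) : AIZ x (c • z) := by
  intro v hvx hvz
  set t : ℝ := |c| + 1 with ht
  have htpos : (0:ℝ) < t := by positivity
  have ht1 : (1:ℝ) ≤ t := by
    have := abs_nonneg c; linarith
  have key : t⁻¹ • v ≤ 0 := by
    apply h (t⁻¹ • v)
    · intro w hw1 hw2
      have hwpos : 0 ≤ w := nonneg_of_pair hw1 hw2
      have htw : w ≤ t • w := by
        have : (0:X) ≤ (t - 1) • w := smul_nonneg (by linarith) hwpos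
        have := le_of_le_of_sub_eq this (by abel : (t-1) • w - 0 = ((1:ℝ) • w + (t-1) • w) - (1:ℝ) • w)
        calc w = (1:ℝ) • w := (one_smul ℝ w).symm
        _ ≤ (1:ℝ) • w + (t-1) • w := this
        _ = t • w := by rw [← add_smul]; norm_num
      have hvtw : v ≤ t • w := le_trans (hvx w hw1 hw2) htw
      calc t⁻¹ • v ≤ t⁻¹ • (t • w) := smul_le_smul_of_nonneg_left hvtw (by positivity)
      _ = w := by rw [smul_smul, inv_mul_cancel₀ (ne_of_gt htpos), one_smul]
    · intro w hw1 hw2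
      have habs : |c / t| ≤ 1 := by
        rw [abs_div, abs_of_pos htpos]
        rw [div_le_one htpos]; simp [ht]
      have h1 : (c / t) • z ≤ w := smul_le_of_abs_le hw1 hw2 habs
      have h2 : (-(c / t)) • z ≤ w := smul_le_of_abs_le hw1 hw2 (by rwa [abs_neg])
      have e1 : c • z = t • ((c/t) • z) := by
        rw [smul_smul]; congr 1; field_simp
      have e2 : -(c • z) = t • ((-(c/t)) • z) := by
        rw [smul_smul, ← neg_smul]; congr 1; field_simp
      have hb1 : c • z ≤ t • w := by
        rw [e1]; exact smul_le_smul_of_nonneg_left h1 (le_of_lt htpos)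
      have hb2 : -(c • z) ≤ t • w := by
        rw [e2]; exact smul_le_smul_of_nonneg_left h2 (le_of_lt htpos)
      have hvtw : v ≤ t • w := hvz (t • w) hb1 hb2
      calc t⁻¹ • v ≤ t⁻¹ • (t • w) := smul_le_smul_of_nonneg_left hvtw (by positivity)
      _ = w := by rw [smul_smul, inv_mul_cancel₀ (ne_of_gt htpos), one_smul]
  have : v = t • (t⁻¹ • v) := by
    rw [smul_smul, mul_inv_cancel₀ (ne_of_gt htpos), one_smul]
  rw [this]
  calc t • (t⁻¹ • v) ≤ t • (0:X) := smul_le_smul_of_nonneg_left key (le_of_lt htpos)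
  _ = 0 := smul_zero t

lemma AIZ.self_eq_zero {x : X} (h : AIZ x x) : x = 0 := by
  have h1 : x ≤ 0 := h x (fun w hw _ => hw) (fun w hw _ => hw)
  have h2 : -x ≤ 0 := h (-x) (fun w _ hw => hw) (fun w _ hw => hw)
  exact le_antisymm h1 (by simpa using h2)

/-- The key consequence of disjointness (via a Minkowski-sum trick):
an upper bound of `{x, -x, z, -z}` is an upper bound of `{x+z, -x-z, x-z, z-x}`. -/
lemma ub_four_of_uDisjoint {x z : X} (hd : UDisjoint x z) {u : X}
    (hx : x ≤ u) (hx' : -x ≤ u) (hz : z ≤ u) (hz' : -z ≤ u) :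
    x + z ≤ u ∧ -x - z ≤ u ∧ x - z ≤ u ∧ z - x ≤ u := by
  refine ⟨?_, ?_, ?_, ?_⟩
  · -- u + u - (x+z) ∈ ub {x-z, z-x} = ub {x+z, -x-z}
    have m : u + u - (x + z) ∈ upperBounds ({x - z, z - x} : Set X) := by
      rw [mem_ub_pair]
      constructor
      · exact le_of_le_of_sub_eq (add_le_add hx hx) (by abel)
      · exact le_of_le_of_sub_eq (add_le_add hz hz) (by abel)
    rw [← hd] at m
    have := (mem_ub_pair.mp m).1
    exact half_le (le_of_le_of_sub_eq this (by abel))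
  · have m : u + u + (x + z) ∈ upperBounds ({x - z, z - x} : Set X) := by
      rw [mem_ub_pair]
      constructor
      · exact le_of_le_of_sub_eq (add_le_add hz' hz') (by abel)
      · exact le_of_le_of_sub_eq (add_le_add hx' hx') (by abel)
    rw [← hd] at m
    have := (mem_ub_pair.mp m).2
    refine half_le (le_of_le_of_sub_eq this (by abel))
  · have m : u + u - (x - z) ∈ upperBounds ({x + z, -x - z} : Set X) := by
      rw [mem_ub_pair]
      constructor
      · exact le_of_le_of_sub_eq (add_le_add hx hx) (by abel)
      · exact le_of_le_of_sub_eq (add_le_add hz' hz') (by abel)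
    rw [hd] at m
    have := (mem_ub_pair.mp m).1
    exact half_le (le_of_le_of_sub_eq this (by abel))
  · have m : u + u + (x - z) ∈ upperBounds ({x + z, -x - z} : Set X) := by
      rw [mem_ub_pair]
      constructor
      · exact le_of_le_of_sub_eq (add_le_add hz hz) (by abel)
      · exact le_of_le_of_sub_eq (add_le_add hx' hx') (by abel)
    rw [hd] at m
    have := (mem_ub_pair.mp m).2
    exact half_le (le_of_le_of_sub_eq this (by abel))

/-- In a pre-Riesz space, disjointness implies `AIZ`. -/
lemma aiz_of_uDisjoint (hX : IsPreRiesz X) {x z : X} (hd : UDisjoint x z) : AIZ x z := by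
  intro v h1 h2
  have key : (0:X) ≤ -v := by
    refine hX ({x + z, -x - z, x - z, z - x} : Set X) (-v) ?_ ?_ ?_
    · exact (Set.finite_singleton _).insert _ |>.insert _ |>.insert _
    · exact ⟨x + z, Set.mem_insert _ _⟩
    · intro u hu
      have hy : ∀ a ∈ ({x + z, -x - z, x - z, z - x} : Set X), a ≤ u + v := by
        intro a ha
        have : -v + a ≤ u := hu ⟨a, ha, rfl⟩
        exact le_of_le_of_sub_eq this (by abel)
      have hy1 : x + z ≤ u + v := hy _ (by simp)
      have hy2 : -x - z ≤ u + v := hy _ (by simp)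
      have hy3 : x - z ≤ u + v := hy _ (by simp)
      have hy4 : z - x ≤ u + v := hy _ (by simp)
      -- derive u ≥ x, -x, z, -z
      have hux : x ≤ u := by
        have hb1 : z ≤ u + v - x := le_of_le_of_sub_eq hy1 (by abel)
        have hb2 : -z ≤ u + v - x := le_of_le_of_sub_eq hy3 (by abel)
        have := h2 (u + v - x) hb1 hb2
        exact le_of_le_of_sub_eq this (by abel)
      have hux' : -x ≤ u := by
        have hb1 : z ≤ u + v + x := le_of_le_of_sub_eq hy4 (by abel)
        have hb2 : -z ≤ u + v + x := le_of_le_of_sub_eq hy2 (by abel)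
        have := h2 (u + v + x) hb1 hb2
        exact le_of_le_of_sub_eq this (by abel)
      have huz : z ≤ u := by
        have hb1 : x ≤ u + v - z := le_of_le_of_sub_eq hy1 (by abel)
        have hb2 : -x ≤ u + v - z := le_of_le_of_sub_eq hy4 (by abel)
        have := h1 (u + v - z) hb1 hb2
        exact le_of_le_of_sub_eq this (by abel)
      have huz' : -z ≤ u := by
        have hb1 : x ≤ u + v + z := le_of_le_of_sub_eq hy3 (by abel)
        have hb2 : -x ≤ u + v + z := le_of_le_of_sub_eq hy2 (by abel)
        have := h1 (u + v + z) hb1 hb2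
        exact le_of_le_of_sub_eq this (by abel)
      obtain ⟨c1, c2, c3, c4⟩ := ub_four_of_uDisjoint hd hux hux' huz huz'
      intro a ha
      rcases ha with rfl | ha
      · exact c1
      rcases ha with rfl | ha
      · exact c2
      rcases ha with rfl | ha
      · exact c3
      rw [Set.mem_singleton_iff] at ha; subst ha
      exact c4
  simpa using neg_nonneg.mp (by simpa using key)

lemma AIZ.sum_right {x : X} {ι : Type*} (s : Finset ι) (f : ι → X)
    (h : ∀ i ∈ s, AIZ x (f i)) : AIZ x (∑ i ∈ s, f i) :=
  Finset.sum_induction f (AIZ x) (fun _ _ => AIZ.add_right) (AIZ.zero_right x) h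

end AuxPreRiesz

/-- If `A₁, …, A_m` are pairwise disjoint subsets and each `(x_{j,1}, …, x_{j,n_j})` is a
linearly independent system in `A_j`, then the combined system is linearly independent. -/
theorem stmt_14 (hX : IsPreRiesz X) {m : ℕ} (A : Fin m → Set X)
    (hA : ∀ i j, i ≠ j → ∀ a ∈ A i, ∀ b ∈ A j, UDisjoint a b)
    (n : Fin m → ℕ) (v : (j : Fin m) → Fin (n j) → X)
    (hv : ∀ j k, v j k ∈ A j) (hli : ∀ j, LinearIndependent ℝ (v j)) :
    LinearIndependent ℝ (fun p : (Σ j : Fin m, Fin (n j)) => v p.1 p.2) := by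
  rw [Fintype.linearIndependent_iff]
  intro g hg
  set w : Fin m → X := fun j => ∑ k, g ⟨j, k⟩ • v j k with hwdef
  have hsum : ∑ j, w j = 0 := by
    rw [← hg, ← Finset.univ_sigma_univ, Finset.sum_sigma]
  have hwzero : ∀ j, w j = 0 := by
    intro j
    -- AIZ (w j) (w i) for i ≠ j
    have haiz : ∀ i, i ≠ j → AIZ (w j) (w i) := by
      intro i hij
      have base : ∀ k l, AIZ (v j k) (v i l) := fun k l =>
        aiz_of_uDisjoint hX (hA j i (fun h => hij h.symm) (v j k) (hv j k) (v i l) (hv i l))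
      have step1 : ∀ l, AIZ (w j) (v i l) := by
        intro l
        refine AIZ.symm (AIZ.sum_right _ _ ?_)
        intro k _
        exact AIZ.smul_right _ (AIZ.symm (base k l))
      refine AIZ.sum_right _ _ ?_
      intro l _
      exact AIZ.smul_right _ (step1 l)
    have hself : AIZ (w j) (w j) := by
      have hsum' : ∑ i ∈ Finset.univ.erase j, w i = -(w j) := by
        have := Finset.sum_erase_add Finset.univ w (Finset.mem_univ j)
        rw [hsum] at this
        exact eq_neg_of_add_eq_zero_left this
      have h1 : AIZ (w j) (∑ i ∈ Finset.univ.erase j, w i) := by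
        refine AIZ.sum_right _ _ ?_
        intro i hi
        exact haiz i (Finset.ne_of_mem_erase hi)
      rw [hsum'] at h1
      have := AIZ.neg_right h1
      simpa using this
    exact AIZ.self_eq_zero hself
  intro p
  obtain ⟨j, k⟩ := p
  have := Fintype.linearIndependent_iff.mp (hli j) (fun k => g ⟨j, k⟩)
    (by simpa [hwdef] using hwzero j)
  exact this k
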